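/- Every combinatorial tetrahedral chain contains at most 3 zigzags up to reversing, i.e., |𝒵(Θₙ)| ≤ 6 for every combinatorial tetrahedral chain Θₙ. -/

import Mathlib

set_option synthInstance.maxSize 60000
set_option synthInstance.maxHeartbeats 1000000
set_option maxHeartbeats 4000000

def IsZigzag {V : Type*} [DecidableEq V] (G : SimpleGraph V)
    (faces : Finset (Finset V)) (z : ℤ → V) : Prop :=
  ∀ i : ℤ,
    G.Adj (z i) (z (i + 1)) ∧
    z i ≠ z (i + 2) ∧
    (∃ F ∈ faces, z i ∈ F ∧ z (i + 1) ∈ F ∧ z (i + 2) ∈ F) ∧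
    (∀ F ∈ faces, ∀ F' ∈ faces,
      (z i ∈ F ∧ z (i + 1) ∈ F ∧ z (i + 2) ∈ F) →
      (z (i + 1) ∈ F' ∧ z (i + 2) ∈ F' ∧ z (i + 3) ∈ F') → F ≠ F') ∧
    ({z i, z (i + 1)} : Set V) ∩ {z (i + 2), z (i + 3)} = ∅

def tetraGraph : SimpleGraph ℕ := SimpleGraph.fromRel (fun x y => x < 4 ∧ y < 4)

def tetraFaces : Finset (Finset ℕ) := {{0, 1, 2}, {0, 1, 3}, {0, 2, 3}, {1, 2, 3}}

inductive IsTetChain : ℕ → SimpleGraph ℕ → Finset (Finset ℕ) → Finset (Finset ℕ) → Prop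
  | base : IsTetChain 1 tetraGraph tetraFaces tetraFaces
  | step {n : ℕ} {G : SimpleGraph ℕ} {faces fresh : Finset (Finset ℕ)}
      {F : Finset ℕ} {a b c : ℕ} :
      IsTetChain n G faces fresh → F ∈ fresh → F = {a, b, c} →
      a ≠ b → a ≠ c → b ≠ c →
      IsTetChain (n + 1)
        (G ⊔ SimpleGraph.fromRel (fun x y => x = n + 3 ∧ y ∈ F))
        ((faces.erase F) ∪ {{n + 3, a, b}, {n + 3, b, c}, {n + 3, a, c}})
        {{n + 3, a, b}, {n + 3, b, c}, {n + 3, a, c}}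

namespace TCP

def trip (t : ℕ × ℕ × ℕ) : Finset ℕ := {t.1, t.2.1, t.2.2}

def IsFlag (faces : Finset (Finset ℕ)) (t : ℕ × ℕ × ℕ) : Prop :=
  t.1 ≠ t.2.1 ∧ t.1 ≠ t.2.2 ∧ t.2.1 ≠ t.2.2 ∧ trip t ∈ faces

instance (faces : Finset (Finset ℕ)) (t : ℕ × ℕ × ℕ) : Decidable (IsFlag faces t) := by
  unfold IsFlag; infer_instance

def Good (G : SimpleGraph ℕ) (faces : Finset (Finset ℕ)) : Prop :=
  (∀ F ∈ faces, F.card = 3) ∧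
  (∀ F ∈ faces, ∀ y ∈ F, ∀ z ∈ F, y ≠ z → ∃ A ∈ faces, A ≠ F ∧ y ∈ A ∧ z ∈ A) ∧
  (∀ A ∈ faces, ∀ B ∈ faces, ∀ C ∈ faces, ∀ y ∈ A, ∀ z ∈ A,
      y ∈ B → z ∈ B → y ∈ C → z ∈ C → y ≠ z → A = B ∨ A = C ∨ B = C) ∧
  (∀ F ∈ faces, ∀ u ∈ F, ∀ w ∈ F, u ≠ w → G.Adj u w)

lemma exists_third {B : Finset ℕ} (hB : B.card = 3) {y z : ℕ} (hy : y ∈ B) (hz : z ∈ B)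
    (hyz : y ≠ z) : ∃ u, u ≠ y ∧ u ≠ z ∧ B = {y, z, u} := by
  classical
  have hsub : ({y, z} : Finset ℕ) ⊆ B := by
    intro w hw; simp at hw; rcases hw with rfl | rfl <;> assumption
  have hcard : (B \ {y, z}).card = 1 := by
    rw [Finset.card_sdiff_of_subset hsub, hB]
    simp [Finset.card_insert_of_notMem, hyz]
  obtain ⟨u, hu⟩ := Finset.card_eq_one.mp hcard
  have huB : u ∈ B \ {y, z} := by rw [hu]; simp
  have huB' : u ∈ B := (Finset.mem_sdiff.mp huB).1
  have huyz : u ∉ ({y, z} : Finset ℕ) := (Finset.mem_sdiff.mp huB).2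
  simp at huyz
  refine ⟨u, huyz.1, huyz.2, ?_⟩
  apply Finset.Subset.antisymm
  · intro w hw
    by_cases hwy : w ∈ ({y, z} : Finset ℕ)
    · simp at hwy ⊢; tauto
    · have : w ∈ B \ {y, z} := Finset.mem_sdiff.mpr ⟨hw, hwy⟩
      rw [hu] at this; simp at this; simp [this]
  · intro w hw
    simp at hw
    rcases hw with rfl | rfl | rfl <;> assumption

lemma face_eq {G faces} (hG : Good G faces) {F : Finset ℕ} (hF : F ∈ faces) {x y z : ℕ}
    (hx : x ∈ F) (hy : y ∈ F) (hz : z ∈ F) (hxy : x ≠ y) (hxz : x ≠ z) (hyz : y ≠ z) :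
    F = ({x, y, z} : Finset ℕ) := by
  have h3 : ({x, y, z} : Finset ℕ).card = 3 := by
    rw [Finset.card_insert_of_notMem (by simp [hxy, hxz]),
      Finset.card_insert_of_notMem (by simp [hyz]), Finset.card_singleton]
  have hsub : ({x, y, z} : Finset ℕ) ⊆ F := by
    intro w hw; simp at hw; rcases hw with rfl | rfl | rfl <;> assumption
  exact ((Finset.eq_of_subset_of_card_le hsub (by rw [hG.1 F hF, h3])).symm)

lemma exists_unique_other {G faces} (hG : Good G faces) {x y z : ℕ}
    (h : IsFlag faces (x, y, z)) :
    ∃! u, ({y, z, u} : Finset ℕ) ∈ faces ∧ u ≠ x ∧ u ≠ y ∧ u ≠ z := by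
  obtain ⟨hxy, hxz, hyz, hmem⟩ := h
  replace hxy : x ≠ y := hxy
  replace hxz : x ≠ z := hxz
  replace hyz : y ≠ z := hyz
  replace hmem : ({x, y, z} : Finset ℕ) ∈ faces := hmem
  have hyF : y ∈ ({x, y, z} : Finset ℕ) := by simp
  have hzF : z ∈ ({x, y, z} : Finset ℕ) := by simp
  obtain ⟨A, hA, hAne, hyA, hzA⟩ := hG.2.1 _ hmem y hyF z hzF hyz
  obtain ⟨u, huy, huz, hAeq⟩ := exists_third (hG.1 A hA) hyA hzA hyz
  have hux : u ≠ x := by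
    rintro rfl
    apply hAne
    rw [hAeq]; ext w; simp; tauto
  refine ⟨u, ⟨by rwa [← hAeq], hux, huy, huz⟩, ?_⟩
  rintro u' ⟨hu'mem, hu'x, hu'y, hu'z⟩
  have hne1 : ({y, z, u'} : Finset ℕ) ≠ ({x, y, z} : Finset ℕ) := by
    intro hcontra
    have : x ∈ ({y, z, u'} : Finset ℕ) := by rw [hcontra]; simp
    simp at this; rcases this with h | h | h
    exacts [hxy h, hxz h, hu'x h.symm]
  have hne2 : A ≠ ({x, y, z} : Finset ℕ) := hAne
  have := hG.2.2.1 _ hmem A hA _ hu'mem y hyF z hzF hyA hzA (by simp) (by simp) hyz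
  rcases this with h | h | h
  · exact absurd h.symm hne2
  · exact absurd h.symm hne1
  · have : u' ∈ A := by rw [h]; simp
    rw [hAeq] at this; simp at this
    rcases this with h | h | h
    exacts [absurd h hu'y, absurd h hu'z, h]

open Classical in
noncomputable def nextV (faces : Finset (Finset ℕ)) (x y z : ℕ) : ℕ :=
  if h : ∃! u, ({y, z, u} : Finset ℕ) ∈ faces ∧ u ≠ x ∧ u ≠ y ∧ u ≠ z then
    h.exists.choose else 0

lemma nextV_spec {G faces} (hG : Good G faces) {x y z : ℕ} (h : IsFlag faces (x, y, z)) :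
    ({y, z, nextV faces x y z} : Finset ℕ) ∈ faces ∧ nextV faces x y z ≠ x ∧
      nextV faces x y z ≠ y ∧ nextV faces x y z ≠ z := by
  have he := exists_unique_other hG h
  unfold nextV
  rw [dif_pos he]
  exact he.exists.choose_spec

lemma nextV_eq {G faces} (hG : Good G faces) {x y z u : ℕ} (h : IsFlag faces (x, y, z))
    (h1 : ({y, z, u} : Finset ℕ) ∈ faces) (h2 : u ≠ x) (h3 : u ≠ y) (h4 : u ≠ z) :
    nextV faces x y z = u := by
  have he := exists_unique_other hG h
  have hs := nextV_spec hG h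
  exact (he.unique hs ⟨h1, h2, h3, h4⟩)

lemma trip_eq (x y z : ℕ) : trip (x, y, z) = ({x, y, z} : Finset ℕ) := rfl

lemma mk_flag {faces} {x y z : ℕ} (h1 : x ≠ y) (h2 : x ≠ z) (h3 : y ≠ z)
    (h4 : ({x, y, z} : Finset ℕ) ∈ faces) : IsFlag faces (x, y, z) := ⟨h1, h2, h3, h4⟩

lemma IsFlag.ne12 {faces} {x y z : ℕ} (h : IsFlag faces (x, y, z)) : x ≠ y := h.1
lemma IsFlag.ne13 {faces} {x y z : ℕ} (h : IsFlag faces (x, y, z)) : x ≠ z := h.2.1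
lemma IsFlag.ne23 {faces} {x y z : ℕ} (h : IsFlag faces (x, y, z)) : y ≠ z := h.2.2.1
lemma IsFlag.mem {faces} {x y z : ℕ} (h : IsFlag faces (x, y, z)) :
    ({x, y, z} : Finset ℕ) ∈ faces := h.2.2.2

lemma trip_comm (x y z : ℕ) : ({x, y, z} : Finset ℕ) = {z, y, x} := by
  ext w; simp; tauto

lemma trip_comm' (x y z : ℕ) : ({x, y, z} : Finset ℕ) = {y, z, x} := by
  ext w; simp; tauto

lemma IsFlag.rev' {faces} {x y z : ℕ} (h : IsFlag faces (x, y, z)) :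
    IsFlag faces (z, y, x) :=
  mk_flag h.ne23.symm h.ne13.symm h.ne12.symm (by rw [← trip_comm x y z]; exact h.mem)

abbrev Flag (faces : Finset (Finset ℕ)) := {t : ℕ × ℕ × ℕ // IsFlag faces t}

noncomputable def flagPerm (G : SimpleGraph ℕ) (faces : Finset (Finset ℕ))
    (hG : Good G faces) : Equiv.Perm (Flag faces) where
  toFun t := ⟨(t.1.2.1, t.1.2.2, nextV faces t.1.1 t.1.2.1 t.1.2.2), by
    obtain ⟨⟨x, y, z⟩, hf⟩ := t
    obtain ⟨hm, hux, huy, huz⟩ := nextV_spec hG hf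
    exact mk_flag hf.ne23 huy.symm huz.symm hm⟩
  invFun t := ⟨(nextV faces t.1.2.2 t.1.2.1 t.1.1, t.1.1, t.1.2.1), by
    obtain ⟨⟨x, y, z⟩, hf⟩ := t
    obtain ⟨hm, hwz, hwy, hwx⟩ := nextV_spec hG hf.rev'
    refine mk_flag hwx hwy hf.ne12 ?_
    have : ({nextV faces z y x, x, y} : Finset ℕ) = {y, x, nextV faces z y x} := by
      ext w; simp; tauto
    rw [this]; exact hm⟩
  left_inv := by
    rintro ⟨⟨x, y, z⟩, hf⟩
    obtain ⟨hm, hux, huy, huz⟩ := nextV_spec hG hf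
    set u := nextV faces x y z with hu
    apply Subtype.ext
    show (nextV faces u z y, y, z) = (x, y, z)
    have hflag : IsFlag faces (u, z, y) := by
      refine mk_flag huz huy hf.ne23.symm ?_
      have : ({u, z, y} : Finset ℕ) = {y, z, u} := by ext w; simp; tauto
      rw [this]; exact hm
    have hx : nextV faces u z y = x := by
      apply nextV_eq hG hflag ?_ hux.symm hf.ne13 hf.ne12
      have : ({z, y, x} : Finset ℕ) = {x, y, z} := by ext w; simp; tauto
      rw [this]; exact hf.mem
    rw [hx]
  right_inv := by
    rintro ⟨⟨x, y, z⟩, hf⟩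
    obtain ⟨hm, hwz, hwy, hwx⟩ := nextV_spec hG hf.rev'
    set w := nextV faces z y x with hw
    apply Subtype.ext
    show (x, y, nextV faces w x y) = (x, y, z)
    have hflag : IsFlag faces (w, x, y) := by
      refine mk_flag hwx hwy hf.ne12 ?_
      have : ({w, x, y} : Finset ℕ) = {y, x, w} := by ext v; simp; tauto
      rw [this]; exact hm
    have hz : nextV faces w x y = z := by
      apply nextV_eq hG hflag hf.mem hwz.symm hf.ne13.symm hf.ne23.symm
    rw [hz]

lemma flagPerm_val {G faces} (hG : Good G faces) (t : Flag faces) :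
    (flagPerm G faces hG t).val =
      (t.val.2.1, t.val.2.2, nextV faces t.val.1 t.val.2.1 t.val.2.2) := rfl

lemma zpow_succ_apply {α : Type*} (e : Equiv.Perm α) (k : ℤ) (t : α) :
    (e ^ (k + 1)) t = e ((e ^ k) t) := by
  rw [show k + 1 = 1 + k by ring, zpow_add, zpow_one]
  rfl

lemma zpow_apply_zpow {α : Type*} (e : Equiv.Perm α) (j k : ℤ) (t : α) :
    (e ^ j) ((e ^ k) t) = (e ^ (j + k)) t := by
  rw [zpow_add]; rfl

noncomputable def flagSeq {G faces} (hG : Good G faces) (T : Flag faces) : ℤ → ℕ :=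
  fun i => ((flagPerm G faces hG ^ i) T).val.1

lemma flagSeq_trip {G faces} (hG : Good G faces) (T : Flag faces) (i : ℤ) :
    ((flagPerm G faces hG ^ i) T).val =
      (flagSeq hG T i, flagSeq hG T (i + 1), flagSeq hG T (i + 2)) := by
  have h1 : ((flagPerm G faces hG ^ (i + 1)) T).val.1 =
      ((flagPerm G faces hG ^ i) T).val.2.1 := by
    rw [zpow_succ_apply, flagPerm_val]
  have h2 : ((flagPerm G faces hG ^ (i + 2)) T).val.1 =
      ((flagPerm G faces hG ^ i) T).val.2.2 := by
    rw [show i + 2 = (i + 1) + 1 by ring, zpow_succ_apply, flagPerm_val, h1,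
      zpow_succ_apply, flagPerm_val]
  show _ = (_, ((flagPerm G faces hG ^ (i+1)) T).val.1, ((flagPerm G faces hG ^ (i+2)) T).val.1)
  rw [h1, h2]
  rfl

lemma flagSeq_flag {G faces} (hG : Good G faces) (T : Flag faces) (i : ℤ) :
    IsFlag faces (flagSeq hG T i, flagSeq hG T (i + 1), flagSeq hG T (i + 2)) := by
  rw [← flagSeq_trip hG T i]
  exact ((flagPerm G faces hG ^ i) T).2

lemma flagSeq_next {G faces} (hG : Good G faces) (T : Flag faces) (i : ℤ) :
    flagSeq hG T (i + 3) =
      nextV faces (flagSeq hG T i) (flagSeq hG T (i + 1)) (flagSeq hG T (i + 2)) := by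
  have h1 : ((flagPerm G faces hG ^ (i + 1)) T).val =
      (flagSeq hG T (i+1), flagSeq hG T (i+2), flagSeq hG T (i+3)) := by
    rw [flagSeq_trip hG T (i+1)]
    norm_num [show i + 1 + 1 = i + 2 by ring, show i + 1 + 2 = i + 3 by ring]
  have h2 := flagSeq_trip hG T i
  have := congrArg (fun p : ℕ × ℕ × ℕ => p.2.2) h1
  simp only at this
  rw [← this, zpow_succ_apply, flagPerm_val, h2]

lemma isZigzag_flagSeq {G faces} (hG : Good G faces) (T : Flag faces) :
    IsZigzag G faces (flagSeq hG T) := by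
  intro i
  set z := flagSeq hG T with hzdef
  have fl0 : IsFlag faces (z i, z (i+1), z (i+2)) := flagSeq_flag hG T i
  have fl1 : IsFlag faces (z (i+1), z (i+2), z (i+3)) := by
    have := flagSeq_flag hG T (i+1)
    simpa [show i + 1 + 1 = i + 2 by ring, show i + 1 + 2 = i + 3 by ring] using this
  have hnext := flagSeq_next hG T i
  have hspec := nextV_spec hG fl0
  rw [← hnext] at hspec
  have h03 : z (i+3) ≠ z i := hspec.2.1
  -- adjacency
  have hadj : G.Adj (z i) (z (i + 1)) :=
    hG.2.2.2 _ fl0.mem (z i) (by simp) (z (i+1)) (by simp) fl0.ne12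
  refine ⟨hadj, fl0.ne13, ⟨{z i, z (i+1), z (i+2)}, fl0.mem, by simp, by simp, by simp⟩,
    ?_, ?_⟩
  · intro F hF F' hF' h1 h2
    have hFeq : F = {z i, z (i+1), z (i+2)} :=
      face_eq hG hF h1.1 h1.2.1 h1.2.2 fl0.ne12 fl0.ne13 fl0.ne23
    have hF'eq : F' = {z (i+1), z (i+2), z (i+3)} :=
      face_eq hG hF' h2.1 h2.2.1 h2.2.2 fl1.ne12 fl1.ne13 fl1.ne23
    intro hc
    rw [hFeq, hF'eq] at hc
    have : z i ∈ ({z (i+1), z (i+2), z (i+3)} : Finset ℕ) := by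
      rw [← hc]; simp
    simp at this
    rcases this with h | h | h
    exacts [fl0.ne12 h, fl0.ne13 h, h03 h.symm]
  · ext w
    simp only [Set.mem_inter_iff, Set.mem_insert_iff, Set.mem_singleton_iff,
      Set.mem_empty_iff_false, iff_false, not_and]
    rintro (rfl | rfl) (h | h)
    exacts [fl0.ne13 h, h03 h.symm, fl1.ne12 h, fl1.ne13 h]

lemma zigzag_flag {G faces} (hG : Good G faces) {z : ℤ → ℕ} (hz : IsZigzag G faces z)
    (i : ℤ) : IsFlag faces (z i, z (i + 1), z (i + 2)) := by
  obtain ⟨hadj, hne, ⟨F, hF, hm1, hm2, hm3⟩, _, _⟩ := hz i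
  have hadj2 := (hz (i+1)).1
  have h12 : z (i+1) ≠ z (i+2) := by
    simpa [show i + 1 + 1 = i + 2 by ring] using hadj2.ne
  refine mk_flag hadj.ne hne h12 ?_
  rw [← face_eq hG hF hm1 hm2 hm3 hadj.ne hne h12]
  exact hF

lemma zigzag_ne03 {G faces} {z : ℤ → ℕ} (hz : IsZigzag G faces z) (i : ℤ) :
    z i ≠ z (i + 3) := by
  have h5 := (hz i).2.2.2.2
  intro hc
  have : z i ∈ ({z i, z (i + 1)} : Set ℕ) ∩ {z (i + 2), z (i + 3)} :=
    ⟨by simp, by rw [hc]; simp⟩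
  rw [h5] at this
  exact this

lemma zigzag_step {G faces} (hG : Good G faces) {z : ℤ → ℕ} (hz : IsZigzag G faces z)
    (i : ℤ) :
    flagPerm G faces hG ⟨(z i, z (i + 1), z (i + 2)), zigzag_flag hG hz i⟩ =
      ⟨(z (i + 1), z (i + 2), z (i + 3)), by
        have := zigzag_flag hG hz (i+1)
        simpa [show i + 1 + 1 = i + 2 by ring, show i + 1 + 2 = i + 3 by ring] using this⟩ := by
  apply Subtype.ext
  rw [flagPerm_val]
  have fl1 : IsFlag faces (z (i+1), z (i+2), z (i+3)) := by
    have := zigzag_flag hG hz (i+1)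
    simpa [show i + 1 + 1 = i + 2 by ring, show i + 1 + 2 = i + 3 by ring] using this
  have : nextV faces (z i) (z (i+1)) (z (i+2)) = z (i+3) := by
    apply nextV_eq hG (zigzag_flag hG hz i) fl1.mem (zigzag_ne03 hz i).symm
      fl1.ne13.symm fl1.ne23.symm
  simp [this]

lemma zigzag_orbit {G faces} (hG : Good G faces) {z : ℤ → ℕ} (hz : IsZigzag G faces z) :
    ∀ i : ℤ, (flagPerm G faces hG ^ i) ⟨(z 0, z 1, z 2), by
        simpa using zigzag_flag hG hz 0⟩ =
      ⟨(z i, z (i + 1), z (i + 2)), zigzag_flag hG hz i⟩ := by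
  intro i
  induction i using Int.induction_on with
  | zero => apply Subtype.ext; norm_num
  | succ i ih =>
    rw [zpow_succ_apply, ih, zigzag_step hG hz i]
    apply Subtype.ext
    norm_num [show (i:ℤ) + 1 + 1 = i + 2 by ring, show (i:ℤ) + 1 + 2 = i + 3 by ring]
  | pred i ih =>
    have hstep := zigzag_step hG hz (-(i:ℤ) - 1)
    have heq : flagPerm G faces hG
        ⟨(z (-(i:ℤ)-1), z (-(i:ℤ)-1+1), z (-(i:ℤ)-1+2)), zigzag_flag hG hz _⟩ =
        (flagPerm G faces hG ^ (-(i:ℤ))) ⟨(z 0, z 1, z 2), by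
          simpa using zigzag_flag hG hz 0⟩ := by
      rw [ih, hstep]
      apply Subtype.ext
      simp only [Prod.mk.injEq]
      exact ⟨congrArg z (by ring), congrArg z (by ring), congrArg z (by ring)⟩
    rw [show (-(i:ℤ) - 1) = -1 + -(i:ℤ) by ring, zpow_add, zpow_neg_one]
    show (flagPerm G faces hG)⁻¹ ((flagPerm G faces hG ^ (-(i:ℤ)))
      ⟨(z 0, z 1, z 2), by simpa using zigzag_flag hG hz 0⟩) = _
    rw [← heq, Equiv.Perm.coe_inv, Equiv.symm_apply_apply]
    apply Subtype.ext
    simp only [Prod.mk.injEq]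
    exact ⟨congrArg z (by ring), congrArg z (by ring), congrArg z (by ring)⟩

lemma cover_to_main {G faces} (hG : Good G faces) (T : Fin 6 → Flag faces)
    (hcov : ∀ t : Flag faces, ∃ j : Fin 6, ∃ k : ℤ, (flagPerm G faces hG ^ k) (T j) = t) :
    ∀ z : ℤ → ℕ, IsZigzag G faces z →
      ∃ j : Fin 6, ∃ k : ℤ, z = fun i => flagSeq hG (T j) (i + k) := by
  intro z hz
  obtain ⟨j, k, hk⟩ := hcov ⟨(z 0, z 1, z 2), by simpa using zigzag_flag hG hz 0⟩
  refine ⟨j, k, ?_⟩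
  funext i
  show z i = ((flagPerm G faces hG ^ (i + k)) (T j)).val.1
  rw [← zpow_apply_zpow _ i k, hk, zigzag_orbit hG hz i]

lemma perm_apply_eq {G faces} (hG : Good G faces) {t : Flag faces} {x y z u : ℕ}
    (ht : t.val = (x, y, z)) (h1 : ({y, z, u} : Finset ℕ) ∈ faces) (h2 : u ≠ x)
    (h3 : u ≠ y) (h4 : u ≠ z) : (flagPerm G faces hG t).val = (y, z, u) := by
  have hf : IsFlag faces (x, y, z) := ht ▸ t.2
  have hnv : nextV faces x y z = u := nextV_eq hG hf h1 h2 h3 h4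
  rw [flagPerm_val, ht]
  simp [hnv]

lemma orbit_shift {α : Type*} (e : Equiv.Perm α) {T t : α} {k : ℤ} (h : (e ^ k) T = t)
    (k₀ : ℤ) : (e ^ (k₀ - k)) t = (e ^ k₀) T := by
  rw [← h, zpow_apply_zpow, sub_add_cancel]

end TCP

namespace TCP
section Step

def stepFaces (faces : Finset (Finset ℕ)) (n a b c : ℕ) : Finset (Finset ℕ) :=
  (faces.erase {a, b, c}) ∪ {{n + 3, a, b}, {n + 3, b, c}, {n + 3, a, c}}

def stepGraph (G : SimpleGraph ℕ) (n a b c : ℕ) : SimpleGraph ℕ :=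
  G ⊔ SimpleGraph.fromRel (fun x y => x = n + 3 ∧ y ∈ ({a, b, c} : Finset ℕ))

structure Ctx (G : SimpleGraph ℕ) (faces : Finset (Finset ℕ)) (n a b c : ℕ) : Prop where
  hG : Good G faces
  hbound : ∀ X ∈ faces, ∀ x ∈ X, x < n + 3
  hF : ({a, b, c} : Finset ℕ) ∈ faces
  hab : a ≠ b
  hac : a ≠ c
  hbc : b ≠ c

variable {G : SimpleGraph ℕ} {faces : Finset (Finset ℕ)} {n a b c : ℕ}

lemma Ctx.va (C : Ctx G faces n a b c) : a < n + 3 := C.hbound _ C.hF a (by simp)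
lemma Ctx.vb (C : Ctx G faces n a b c) : b < n + 3 := C.hbound _ C.hF b (by simp)
lemma Ctx.vc (C : Ctx G faces n a b c) : c < n + 3 := C.hbound _ C.hF c (by simp)

lemma mem_stepFaces {X : Finset ℕ} :
    X ∈ stepFaces faces n a b c ↔
      (X ∈ faces ∧ X ≠ {a, b, c}) ∨ X = {n + 3, a, b} ∨ X = {n + 3, b, c} ∨
        X = {n + 3, a, c} := by
  simp only [stepFaces, Finset.mem_union, Finset.mem_erase, Finset.mem_insert,
    Finset.mem_singleton, and_comm]

lemma v_notin_of_mem (C : Ctx G faces n a b c) {X : Finset ℕ} (hX : X ∈ faces) :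
    n + 3 ∉ X := fun h => lt_irrefl _ (C.hbound X hX _ h)

lemma newface_mem (C : Ctx G faces n a b c) {p q : ℕ} (hp : p ∈ ({a, b, c} : Finset ℕ))
    (hq : q ∈ ({a, b, c} : Finset ℕ)) (hpq : p ≠ q) :
    ({p, q, n + 3} : Finset ℕ) ∈ stepFaces faces n a b c := by
  rw [mem_stepFaces]
  simp only [Finset.mem_insert, Finset.mem_singleton] at hp hq
  rcases hp with rfl | rfl | rfl <;> rcases hq with rfl | rfl | rfl
  · exact absurd rfl hpq
  · exact Or.inr (Or.inl (by ext w; simp; tauto))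
  · exact Or.inr (Or.inr (Or.inr (by ext w; simp; tauto)))
  · exact Or.inr (Or.inl (by ext w; simp; tauto))
  · exact absurd rfl hpq
  · exact Or.inr (Or.inr (Or.inl (by ext w; simp; tauto)))
  · exact Or.inr (Or.inr (Or.inr (by ext w; simp; tauto)))
  · exact Or.inr (Or.inr (Or.inl (by ext w; simp; tauto)))
  · exact absurd rfl hpq

lemma new_of_vmem (C : Ctx G faces n a b c) {X : Finset ℕ}
    (hX : X ∈ stepFaces faces n a b c) (hv : n + 3 ∈ X) :
    X = {n + 3, a, b} ∨ X = {n + 3, b, c} ∨ X = {n + 3, a, c} := by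
  rcases mem_stepFaces.mp hX with ⟨hXf, _⟩ | h
  · exact absurd hv (v_notin_of_mem C hXf)
  · exact h

lemma mem_newface_cases (C : Ctx G faces n a b c) {X : Finset ℕ} {x : ℕ}
    (hX : X ∈ stepFaces faces n a b c) (hvX : n + 3 ∈ X) (hx : x ∈ X) :
    x = n + 3 ∨ x ∈ ({a, b, c} : Finset ℕ) := by
  rcases new_of_vmem C hX hvX with rfl | rfl | rfl <;> simp at hx ⊢ <;> tauto

lemma third_not_in (C : Ctx G faces n a b c) {X : Finset ℕ}
    (hnew : X = {n + 3, a, b} ∨ X = {n + 3, b, c} ∨ X = {n + 3, a, c}) :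
    ∃ r ∈ ({a, b, c} : Finset ℕ), r ∉ X := by
  have hva := C.va; have hvb := C.vb; have hvc := C.vc
  rcases hnew with rfl | rfl | rfl
  · exact ⟨c, by simp, by simp; refine ⟨by omega, fun h => C.hac h.symm, fun h => C.hbc h.symm⟩⟩
  · exact ⟨a, by simp, by simp; refine ⟨by omega, C.hab, C.hac⟩⟩
  · exact ⟨b, by simp, by simp; refine ⟨by omega, fun h => C.hab h.symm, C.hbc⟩⟩

lemma card3_of {x y z : ℕ} (h1 : x ≠ y) (h2 : x ≠ z) (h3 : y ≠ z) :
    ({x, y, z} : Finset ℕ).card = 3 := by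
  rw [Finset.card_insert_of_notMem (by simp [h1, h2]),
    Finset.card_insert_of_notMem (by simp [h3]), Finset.card_singleton]

lemma stepFaces_card (C : Ctx G faces n a b c) :
    ∀ X ∈ stepFaces faces n a b c, X.card = 3 := by
  have hva := C.va; have hvb := C.vb; have hvc := C.vc
  intro X hX
  rcases mem_stepFaces.mp hX with ⟨hXf, _⟩ | rfl | rfl | rfl
  · exact C.hG.1 X hXf
  · exact card3_of (by omega) (by omega) C.hab
  · exact card3_of (by omega) (by omega) C.hbc
  · exact card3_of (by omega) (by omega) C.hac

lemma new_pair_unique (C : Ctx G faces n a b c) {X : Finset ℕ} {y z : ℕ}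
    (hnew : X = {n + 3, a, b} ∨ X = {n + 3, b, c} ∨ X = {n + 3, a, c})
    (hy : y ∈ X) (hz : z ∈ X) (hyv : y ≠ n + 3) (hzv : z ≠ n + 3) (hyz : y ≠ z) :
    X = {y, z, n + 3} := by
  rcases hnew with rfl | rfl | rfl <;> simp at hy hz <;>
    [rcases hy with rfl | rfl | rfl; rcases hy with rfl | rfl | rfl;
     rcases hy with rfl | rfl | rfl] <;> first
  | exact absurd rfl hyv
  | (rcases hz with rfl | rfl | rfl <;> first
      | exact absurd rfl hzv
      | exact absurd rfl hyz
      | (ext w; simp; tauto))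

lemma stepFaces_exist2 (C : Ctx G faces n a b c) :
    ∀ X ∈ stepFaces faces n a b c, ∀ y ∈ X, ∀ z ∈ X, y ≠ z →
      ∃ A ∈ stepFaces faces n a b c, A ≠ X ∧ y ∈ A ∧ z ∈ A := by
  intro X hX y hy z hz hyz
  rcases mem_stepFaces.mp hX with ⟨hXf, hXne⟩ | hnew
  · obtain ⟨A, hA, hAX, hyA, hzA⟩ := C.hG.2.1 X hXf y hy z hz hyz
    by_cases hAF : A = ({a, b, c} : Finset ℕ)
    · refine ⟨{y, z, n + 3}, newface_mem C (hAF ▸ hyA) (hAF ▸ hzA) hyz, ?_, by simp, by simp⟩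
      intro hc
      exact v_notin_of_mem C hXf (hc ▸ (by simp : n + 3 ∈ ({y, z, n + 3} : Finset ℕ)))
    · exact ⟨A, mem_stepFaces.mpr (Or.inl ⟨hA, hAF⟩), hAX, hyA, hzA⟩
  · have hvX : n + 3 ∈ X := by rcases hnew with rfl | rfl | rfl <;> simp
    have hXS : X ∈ stepFaces faces n a b c := hX
    by_cases hyv : y = n + 3
    · -- y = v
      obtain ⟨r, hr, hrX⟩ := third_not_in C hnew
      have hzF : z ∈ ({a, b, c} : Finset ℕ) := by
        rcases mem_newface_cases C hX hvX hz with h | h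
        · exact absurd (hyv.trans h.symm) hyz
        · exact h
      have hzr : z ≠ r := fun h => hrX (h ▸ hz)
      refine ⟨{z, r, n + 3}, newface_mem C hzF hr hzr, ?_, by simp [hyv], by simp⟩
      intro hc
      exact hrX (hc ▸ (by simp : r ∈ ({z, r, n + 3} : Finset ℕ)))
    · by_cases hzv : z = n + 3
      · obtain ⟨r, hr, hrX⟩ := third_not_in C hnew
        have hyF : y ∈ ({a, b, c} : Finset ℕ) := by
          rcases mem_newface_cases C hX hvX hy with h | h
          · exact absurd h hyv
          · exact h
        have hyr : y ≠ r := fun h => hrX (h ▸ hy)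
        refine ⟨{y, r, n + 3}, newface_mem C hyF hr hyr, ?_, by simp, by simp [hzv]⟩
        intro hc
        exact hrX (hc ▸ (by simp : r ∈ ({y, r, n + 3} : Finset ℕ)))
      · have hyF : y ∈ ({a, b, c} : Finset ℕ) := by
          rcases mem_newface_cases C hX hvX hy with h | h
          exacts [absurd h hyv, h]
        have hzF : z ∈ ({a, b, c} : Finset ℕ) := by
          rcases mem_newface_cases C hX hvX hz with h | h
          exacts [absurd h hzv, h]
        obtain ⟨A, hA, hAF, hyA, hzA⟩ := C.hG.2.1 _ C.hF y hyF z hzF hyz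
        refine ⟨A, mem_stepFaces.mpr (Or.inl ⟨hA, hAF⟩), ?_, hyA, hzA⟩
        intro hc
        exact v_notin_of_mem C hA (hc ▸ hvX)

lemma two_new_mem (C : Ctx G faces n a b c) {X : Finset ℕ} {w : ℕ}
    (hw : w ∈ ({a, b, c} : Finset ℕ))
    (hnew : X = {n + 3, a, b} ∨ X = {n + 3, b, c} ∨ X = {n + 3, a, c}) (hwX : w ∈ X) :
    (w = a ∧ (X = {n + 3, a, b} ∨ X = {n + 3, a, c})) ∨
    (w = b ∧ (X = {n + 3, a, b} ∨ X = {n + 3, b, c})) ∨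
    (w = c ∧ (X = {n + 3, b, c} ∨ X = {n + 3, a, c})) := by
  have hva := C.va; have hvb := C.vb; have hvc := C.vc
  have hab := C.hab; have hac := C.hac; have hbc := C.hbc
  simp at hw
  rcases hw with rfl | rfl | rfl <;> rcases hnew with rfl | rfl | rfl <;> simp_all <;> omega

lemma pigeon3 {α : Type*} {A B D X Y : α} (hA : A = X ∨ A = Y) (hB : B = X ∨ B = Y)
    (hD : D = X ∨ D = Y) : A = B ∨ A = D ∨ B = D := by
  rcases hA with rfl | rfl <;> rcases hB with rfl | rfl <;> rcases hD with rfl | rfl <;> simp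

lemma stepFaces_uniq2 (C : Ctx G faces n a b c) :
    ∀ A ∈ stepFaces faces n a b c, ∀ B ∈ stepFaces faces n a b c,
      ∀ D ∈ stepFaces faces n a b c, ∀ y ∈ A, ∀ z ∈ A,
        y ∈ B → z ∈ B → y ∈ D → z ∈ D → y ≠ z → A = B ∨ A = D ∨ B = D := by
  intro A hA B hB D hD y hyA z hzA hyB hzB hyD hzD hyz
  by_cases hyv : y = n + 3
  · subst hyv
    have hAn := new_of_vmem C hA hyA
    have hBn := new_of_vmem C hB hyB
    have hDn := new_of_vmem C hD hyD
    have hzF : z ∈ ({a, b, c} : Finset ℕ) := by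
      rcases mem_newface_cases C hA (by assumption) hzA with h | h
      exacts [absurd h.symm hyz, h]
    have h2A := two_new_mem C hzF hAn hzA
    have h2B := two_new_mem C hzF hBn hzB
    have h2D := two_new_mem C hzF hDn hzD
    have hab := C.hab; have hac := C.hac; have hbc := C.hbc
    rcases h2A with ⟨hz1, hA2⟩ | ⟨hz1, hA2⟩ | ⟨hz1, hA2⟩ <;>
      rcases h2B with ⟨hz2, hB2⟩ | ⟨hz2, hB2⟩ | ⟨hz2, hB2⟩ <;>
      rcases h2D with ⟨hz3, hD2⟩ | ⟨hz3, hD2⟩ | ⟨hz3, hD2⟩ <;>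
      first
      | exact pigeon3 hA2 hB2 hD2
      | (exfalso; omega)
  · by_cases hzv : z = n + 3
    · subst hzv
      have hAn := new_of_vmem C hA hzA
      have hBn := new_of_vmem C hB hzB
      have hDn := new_of_vmem C hD hzD
      have hyF : y ∈ ({a, b, c} : Finset ℕ) := by
        rcases mem_newface_cases C hA (by assumption) hyA with h | h
        exacts [absurd h hyv, h]
      have h2A := two_new_mem C hyF hAn hyA
      have h2B := two_new_mem C hyF hBn hyB
      have h2D := two_new_mem C hyF hDn hyD
      have hab := C.hab; have hac := C.hac; have hbc := C.hbc
      rcases h2A with ⟨hz1, hA2⟩ | ⟨hz1, hA2⟩ | ⟨hz1, hA2⟩ <;>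
        rcases h2B with ⟨hz2, hB2⟩ | ⟨hz2, hB2⟩ | ⟨hz2, hB2⟩ <;>
        rcases h2D with ⟨hz3, hD2⟩ | ⟨hz3, hD2⟩ | ⟨hz3, hD2⟩ <;>
        first
        | exact pigeon3 hA2 hB2 hD2
        | (exfalso; omega)
    · -- neither endpoint is the new vertex
      have hclass : ∀ X, X ∈ stepFaces faces n a b c → y ∈ X → z ∈ X →
          (X ∈ faces ∧ X ≠ {a, b, c}) ∨ X = {y, z, n + 3} := by
        intro X hX hyX hzX
        rcases mem_stepFaces.mp hX with h | hnew
        · exact Or.inl h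
        · exact Or.inr (new_pair_unique C hnew hyX hzX hyv hzv hyz)
      rcases hclass A hA hyA hzA with ⟨hAf, hAne⟩ | hA2 <;>
        rcases hclass B hB hyB hzB with ⟨hBf, hBne⟩ | hB2 <;>
        rcases hclass D hD hyD hzD with ⟨hDf, hDne⟩ | hD2
      · rcases C.hG.2.2.1 A hAf B hBf D hDf y hyA z hzA hyB hzB hyD hzD hyz with h | h | h
        exacts [Or.inl h, Or.inr (Or.inl h), Or.inr (Or.inr h)]
      · -- D new, A B old
        have hyzF : y ∈ ({a, b, c} : Finset ℕ) ∧ z ∈ ({a, b, c} : Finset ℕ) := by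
          constructor
          · rcases mem_newface_cases C hD (by rw [hD2]; simp) hyD with h | h
            exacts [absurd h hyv, h]
          · rcases mem_newface_cases C hD (by rw [hD2]; simp) hzD with h | h
            exacts [absurd h hzv, h]
        rcases C.hG.2.2.1 _ C.hF A hAf B hBf y hyzF.1 z hyzF.2 hyA hzA hyB hzB hyz
          with h | h | h
        exacts [absurd h.symm hAne, absurd h.symm hBne, Or.inl h]
      · -- B new, A D old
        have hyzF : y ∈ ({a, b, c} : Finset ℕ) ∧ z ∈ ({a, b, c} : Finset ℕ) := by
          constructor
          · rcases mem_newface_cases C hB (by rw [hB2]; simp) hyB with h | h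
            exacts [absurd h hyv, h]
          · rcases mem_newface_cases C hB (by rw [hB2]; simp) hzB with h | h
            exacts [absurd h hzv, h]
        rcases C.hG.2.2.1 _ C.hF A hAf D hDf y hyzF.1 z hyzF.2 hyA hzA hyD hzD hyz
          with h | h | h
        exacts [absurd h.symm hAne, absurd h.symm hDne, Or.inr (Or.inl h)]
      · exact Or.inr (Or.inr (hB2.trans hD2.symm))
      · -- A new, B D old
        have hyzF : y ∈ ({a, b, c} : Finset ℕ) ∧ z ∈ ({a, b, c} : Finset ℕ) := by
          constructor
          · rcases mem_newface_cases C hA (by rw [hA2]; simp) hyA with h | h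
            exacts [absurd h hyv, h]
          · rcases mem_newface_cases C hA (by rw [hA2]; simp) hzA with h | h
            exacts [absurd h hzv, h]
        rcases C.hG.2.2.1 _ C.hF B hBf D hDf y hyzF.1 z hyzF.2 hyB hzB hyD hzD hyz
          with h | h | h
        exacts [absurd h.symm hBne, absurd h.symm hDne, Or.inr (Or.inr h)]
      · exact Or.inr (Or.inl (hA2.trans hD2.symm))
      · exact Or.inl (hA2.trans hB2.symm)
      · exact Or.inl (hA2.trans hB2.symm)

lemma stepGraph_adj (C : Ctx G faces n a b c) :
    ∀ X ∈ stepFaces faces n a b c, ∀ u ∈ X, ∀ w ∈ X, u ≠ w →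
      (stepGraph G n a b c).Adj u w := by
  intro X hX u hu w hw huw
  rw [stepGraph, SimpleGraph.sup_adj, SimpleGraph.fromRel_adj]
  rcases mem_stepFaces.mp hX with ⟨hXf, _⟩ | hnew
  · exact Or.inl (C.hG.2.2.2 X hXf u hu w hw huw)
  · have hvX : n + 3 ∈ X := by rcases hnew with rfl | rfl | rfl <;> simp
    rcases mem_newface_cases C hX hvX hu with hu' | hu' <;>
      rcases mem_newface_cases C hX hvX hw with hw' | hw'
    · exact absurd (hu'.trans hw'.symm) huw
    · exact Or.inr ⟨huw, Or.inl ⟨hu', hw'⟩⟩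
    · exact Or.inr ⟨huw, Or.inr ⟨hw', hu'⟩⟩
    · exact Or.inl (C.hG.2.2.2 _ C.hF u hu' w hw' huw)

lemma stepGood (C : Ctx G faces n a b c) :
    Good (stepGraph G n a b c) (stepFaces faces n a b c) :=
  ⟨stepFaces_card C, stepFaces_exist2 C, stepFaces_uniq2 C, stepGraph_adj C⟩

end Step

section Step2

variable {G : SimpleGraph ℕ} {faces : Finset (Finset ℕ)} {n a b c : ℕ}

lemma flagPerm_inv_val {G faces} (hG : Good G faces) (t : Flag faces) :
    ((flagPerm G faces hG)⁻¹ t).val =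
      (nextV faces t.val.2.2 t.val.2.1 t.val.1, t.val.1, t.val.2.1) := rfl

lemma perm_val_of {G faces} (hG : Good G faces) {t : Flag faces} {x y z : ℕ}
    (ht : t.val = (x, y, z)) :
    (flagPerm G faces hG t).val = (y, z, nextV faces x y z) := by
  rw [flagPerm_val, ht]

lemma perm_inv_val_of {G faces} (hG : Good G faces) {t : Flag faces} {x y z : ℕ}
    (ht : t.val = (x, y, z)) :
    ((flagPerm G faces hG)⁻¹ t).val = (nextV faces z y x, x, y) := by
  rw [flagPerm_inv_val, ht]

lemma orbit_cancel {α : Type*} (e : Equiv.Perm α) {u t : α} {m k₁ : ℤ}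
    (h : (e ^ m) u = (e ^ k₁) t) : (e ^ (m - k₁)) u = t := by
  have h2 : (e ^ (-k₁)) ((e ^ m) u) = (e ^ (-k₁)) ((e ^ k₁) t) := by rw [h]
  rw [zpow_apply_zpow, zpow_apply_zpow, show -k₁ + m = m - k₁ by ring,
    show -k₁ + k₁ = (0:ℤ) by ring, zpow_zero] at h2
  simpa using h2

lemma flag'_to_old (C : Ctx G faces n a b c) {x y z : ℕ}
    (hf : IsFlag (stepFaces faces n a b c) (x, y, z))
    (hv : n + 3 ∉ ({x, y, z} : Finset ℕ)) :
    IsFlag faces (x, y, z) ∧ ({x, y, z} : Finset ℕ) ≠ {a, b, c} := by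
  rcases mem_stepFaces.mp hf.mem with ⟨h1, h2⟩ | h
  · exact ⟨mk_flag hf.ne12 hf.ne13 hf.ne23 h1, h2⟩
  · exfalso
    rcases h with h | h | h <;> exact hv (h ▸ (by simp))

lemma next_old (C : Ctx G faces n a b c) {x y z : ℕ} (hf : IsFlag faces (x, y, z))
    (hne : ({x, y, z} : Finset ℕ) ≠ {a, b, c}) :
    (({y, z, nextV faces x y z} : Finset ℕ) ≠ {a, b, c} →
      nextV (stepFaces faces n a b c) x y z = nextV faces x y z) ∧
    (({y, z, nextV faces x y z} : Finset ℕ) = {a, b, c} →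
      nextV (stepFaces faces n a b c) x y z = n + 3) := by
  obtain ⟨hm, hux, huy, huz⟩ := nextV_spec C.hG hf
  have hf' : IsFlag (stepFaces faces n a b c) (x, y, z) :=
    mk_flag hf.ne12 hf.ne13 hf.ne23 (mem_stepFaces.mpr (Or.inl ⟨hf.mem, hne⟩))
  constructor
  · intro h
    exact nextV_eq (stepGood C) hf' (mem_stepFaces.mpr (Or.inl ⟨hm, h⟩)) hux huy huz
  · intro h
    have hy : y ∈ ({a, b, c} : Finset ℕ) := h ▸ (by simp)
    have hz : z ∈ ({a, b, c} : Finset ℕ) := h ▸ (by simp)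
    have bx := C.hbound _ hf.mem x (by simp [trip])
    have by' := C.hbound _ hf.mem y (by simp [trip])
    have bz := C.hbound _ hf.mem z (by simp [trip])
    exact nextV_eq (stepGood C) hf' (newface_mem C hy hz hf.ne23)
      (by omega) (by omega) (by omega)

lemma next_detour1 (C : Ctx G faces n a b c) {p q r : ℕ}
    (hp : p ∈ ({a, b, c} : Finset ℕ)) (hq : q ∈ ({a, b, c} : Finset ℕ))
    (hr : r ∈ ({a, b, c} : Finset ℕ)) (hpq : p ≠ q) (hpr : p ≠ r) (hqr : q ≠ r) :
    nextV (stepFaces faces n a b c) p q (n + 3) = r := by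
  have bp := C.hbound _ C.hF p hp
  have bq := C.hbound _ C.hF q hq
  have br := C.hbound _ C.hF r hr
  have hfl : IsFlag (stepFaces faces n a b c) (p, q, n + 3) :=
    mk_flag hpq (by omega) (by omega) (newface_mem C hp hq hpq)
  apply nextV_eq (stepGood C) hfl ?_ hpr.symm hqr.symm (by omega)
  have : ({q, n + 3, r} : Finset ℕ) = {q, r, n + 3} := by ext w; simp; tauto
  rw [this]
  exact newface_mem C hq hr hqr

lemma next_detour2 (C : Ctx G faces n a b c) {p q r : ℕ}
    (hp : p ∈ ({a, b, c} : Finset ℕ)) (hq : q ∈ ({a, b, c} : Finset ℕ))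
    (hr : r ∈ ({a, b, c} : Finset ℕ)) (hpq : p ≠ q) (hpr : p ≠ r) (hqr : q ≠ r) :
    nextV (stepFaces faces n a b c) q (n + 3) r = p := by
  have bp := C.hbound _ C.hF p hp
  have bq := C.hbound _ C.hF q hq
  have br := C.hbound _ C.hF r hr
  have hfl : IsFlag (stepFaces faces n a b c) (q, n + 3, r) := by
    refine mk_flag (by omega) hqr (by omega) ?_
    have : ({q, n + 3, r} : Finset ℕ) = {q, r, n + 3} := by ext w; simp; tauto
    rw [this]
    exact newface_mem C hq hr hqr
  apply nextV_eq (stepGood C) hfl ?_ hpq (by omega) hpr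
  have : ({n + 3, r, p} : Finset ℕ) = {r, p, n + 3} := by ext w; simp; tauto
  rw [this]
  exact newface_mem C hr hp (fun h => hpr h.symm)

lemma third_elt (C : Ctx G faces n a b c) {x z : ℕ} (hx : x ∈ ({a, b, c} : Finset ℕ))
    (hz : z ∈ ({a, b, c} : Finset ℕ)) (hxz : x ≠ z) :
    ∃ r ∈ ({a, b, c} : Finset ℕ), r ≠ x ∧ r ≠ z := by
  have hab := C.hab; have hac := C.hac; have hbc := C.hbc
  simp only [Finset.mem_insert, Finset.mem_singleton] at hx hz
  rcases hx with rfl | rfl | rfl <;> rcases hz with rfl | rfl | rfl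
  · exact absurd rfl hxz
  · exact ⟨c, by simp, fun h => hac h.symm, fun h => hbc h.symm⟩
  · exact ⟨b, by simp, fun h => hab h.symm, hbc⟩
  · exact ⟨c, by simp, fun h => hbc h.symm, fun h => hac h.symm⟩
  · exact absurd rfl hxz
  · exact ⟨a, by simp, hab, hac⟩
  · exact ⟨b, by simp, hbc, fun h => hab h.symm⟩
  · exact ⟨a, by simp, hac, hab⟩
  · exact absurd rfl hxz

end Step2

section Step3

variable {G : SimpleGraph ℕ} {faces : Finset (Finset ℕ)} {n a b c : ℕ}

lemma fwd_hit1 (C : Ctx G faces n a b c) (t : Flag (stepFaces faces n a b c))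
    (s : Flag faces) (hval : s.val = t.val)
    (hhit : trip ((flagPerm G faces C.hG) s).val = ({a, b, c} : Finset ℕ)) :
    n + 3 ∈ trip ((flagPerm _ _ (stepGood C)) t).val := by
  obtain ⟨⟨x, y, z⟩, hfS⟩ := t
  replace hval : s.val = (x, y, z) := hval
  have hold : IsFlag faces (x, y, z) := hval ▸ s.2
  have hvn : n + 3 ∉ ({x, y, z} : Finset ℕ) := v_notin_of_mem C hold.mem
  have hne : ({x, y, z} : Finset ℕ) ≠ {a, b, c} := (flag'_to_old C hfS hvn).2
  have hEs : (flagPerm G faces C.hG s).val = (y, z, nextV faces x y z) :=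
    perm_val_of C.hG hval
  rw [hEs, trip_eq] at hhit
  have hE't : (flagPerm _ _ (stepGood C) ⟨(x, y, z), hfS⟩).val = (y, z, n + 3) := by
    rw [perm_val_of (stepGood C) rfl, (next_old C hold hne).2 hhit]
  rw [hE't, trip_eq]
  simp

lemma fwd_nohit (C : Ctx G faces n a b c) (t : Flag (stepFaces faces n a b c))
    (s : Flag faces) (hval : s.val = t.val)
    (hhit : trip ((flagPerm G faces C.hG) s).val ≠ ({a, b, c} : Finset ℕ)) :
    ((flagPerm G faces C.hG) s).val = ((flagPerm _ _ (stepGood C)) t).val := by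
  obtain ⟨⟨x, y, z⟩, hfS⟩ := t
  replace hval : s.val = (x, y, z) := hval
  have hold : IsFlag faces (x, y, z) := hval ▸ s.2
  have hvn : n + 3 ∉ ({x, y, z} : Finset ℕ) := v_notin_of_mem C hold.mem
  have hne : ({x, y, z} : Finset ℕ) ≠ {a, b, c} := (flag'_to_old C hfS hvn).2
  have hEs : (flagPerm G faces C.hG s).val = (y, z, nextV faces x y z) :=
    perm_val_of C.hG hval
  rw [hEs, trip_eq] at hhit
  rw [hEs, perm_val_of (stepGood C) rfl, (next_old C hold hne).1 hhit]

lemma fwd_hit (C : Ctx G faces n a b c) : ∀ m : ℕ,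
    ∀ t : Flag (stepFaces faces n a b c), ∀ s : Flag faces, s.val = t.val →
    trip ((flagPerm G faces C.hG ^ ((m : ℤ) + 1)) s).val = ({a, b, c} : Finset ℕ) →
    ∃ k : ℤ, n + 3 ∈ trip ((flagPerm _ _ (stepGood C) ^ k) t).val := by
  intro m
  induction m with
  | zero =>
    intro t s hval hhit
    rw [show ((0 : ℕ) : ℤ) + 1 = 1 by norm_num, zpow_one] at hhit
    exact ⟨1, by rw [zpow_one]; exact fwd_hit1 C t s hval hhit⟩
  | succ m ih =>
    intro t s hval hhit
    by_cases hhit1 : trip ((flagPerm G faces C.hG) s).val = ({a, b, c} : Finset ℕ)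
    · exact ⟨1, by rw [zpow_one]; exact fwd_hit1 C t s hval hhit1⟩
    · have hval' : ((flagPerm G faces C.hG) s).val =
          ((flagPerm _ _ (stepGood C)) t).val := fwd_nohit C t s hval hhit1
      have hshift : (flagPerm G faces C.hG ^ ((m : ℤ) + 1))
          ((flagPerm G faces C.hG) s) =
          (flagPerm G faces C.hG ^ (((m + 1 : ℕ) : ℤ) + 1)) s := by
        rw [show (((m + 1 : ℕ)) : ℤ) + 1 = ((m : ℤ) + 1) + 1 by push_cast; ring,
          zpow_add_one]
        rfl
      obtain ⟨k, hk⟩ := ih ((flagPerm _ _ (stepGood C)) t)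
        ((flagPerm G faces C.hG) s) hval' (by rw [hshift]; exact hhit)
      refine ⟨k + 1, ?_⟩
      have hconv : (flagPerm _ _ (stepGood C) ^ (k + 1)) t =
          (flagPerm _ _ (stepGood C) ^ k) ((flagPerm _ _ (stepGood C)) t) := by
        rw [zpow_add_one]
        rfl
      rw [hconv]
      exact hk

lemma bwd_hit1 (C : Ctx G faces n a b c) (t : Flag (stepFaces faces n a b c))
    (s : Flag faces) (hval : s.val = t.val)
    (hhit : trip ((flagPerm G faces C.hG)⁻¹ s).val = ({a, b, c} : Finset ℕ)) :
    n + 3 ∈ trip ((flagPerm _ _ (stepGood C))⁻¹ t).val := by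
  obtain ⟨⟨x, y, z⟩, hfS⟩ := t
  replace hval : s.val = (x, y, z) := hval
  have hold : IsFlag faces (x, y, z) := hval ▸ s.2
  have hvn : n + 3 ∉ ({x, y, z} : Finset ℕ) := v_notin_of_mem C hold.mem
  have hne : ({x, y, z} : Finset ℕ) ≠ {a, b, c} := (flag'_to_old C hfS hvn).2
  have hrev : IsFlag faces (z, y, x) := hold.rev'
  have hnerev : ({z, y, x} : Finset ℕ) ≠ {a, b, c} := by
    rw [← trip_comm x y z]; exact hne
  have hEs : ((flagPerm G faces C.hG)⁻¹ s).val = (nextV faces z y x, x, y) :=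
    perm_inv_val_of C.hG hval
  rw [hEs, trip_eq] at hhit
  have hsetc : ({y, x, nextV faces z y x} : Finset ℕ) =
      {nextV faces z y x, x, y} := by ext w; simp; tauto
  have hFs : ({y, x, nextV faces z y x} : Finset ℕ) = {a, b, c} := by
    rw [hsetc]; exact hhit
  have : nextV (stepFaces faces n a b c) z y x = n + 3 :=
    (next_old C hrev hnerev).2 hFs
  rw [perm_inv_val_of (stepGood C) rfl, this, trip_eq]
  simp

lemma bwd_nohit (C : Ctx G faces n a b c) (t : Flag (stepFaces faces n a b c))
    (s : Flag faces) (hval : s.val = t.val)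
    (hhit : trip ((flagPerm G faces C.hG)⁻¹ s).val ≠ ({a, b, c} : Finset ℕ)) :
    ((flagPerm G faces C.hG)⁻¹ s).val = ((flagPerm _ _ (stepGood C))⁻¹ t).val := by
  obtain ⟨⟨x, y, z⟩, hfS⟩ := t
  replace hval : s.val = (x, y, z) := hval
  have hold : IsFlag faces (x, y, z) := hval ▸ s.2
  have hvn : n + 3 ∉ ({x, y, z} : Finset ℕ) := v_notin_of_mem C hold.mem
  have hne : ({x, y, z} : Finset ℕ) ≠ {a, b, c} := (flag'_to_old C hfS hvn).2
  have hrev : IsFlag faces (z, y, x) := hold.rev'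
  have hnerev : ({z, y, x} : Finset ℕ) ≠ {a, b, c} := by
    rw [← trip_comm x y z]; exact hne
  have hEs : ((flagPerm G faces C.hG)⁻¹ s).val = (nextV faces z y x, x, y) :=
    perm_inv_val_of C.hG hval
  rw [hEs, trip_eq] at hhit
  have hsetc : ({y, x, nextV faces z y x} : Finset ℕ) =
      {nextV faces z y x, x, y} := by ext w; simp; tauto
  have hFs : ({y, x, nextV faces z y x} : Finset ℕ) ≠ {a, b, c} := by
    rw [hsetc]; exact hhit
  rw [hEs, perm_inv_val_of (stepGood C) rfl, (next_old C hrev hnerev).1 hFs]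

lemma bwd_hit (C : Ctx G faces n a b c) : ∀ m : ℕ,
    ∀ t : Flag (stepFaces faces n a b c), ∀ s : Flag faces, s.val = t.val →
    trip (((flagPerm G faces C.hG)⁻¹ ^ ((m : ℤ) + 1)) s).val = ({a, b, c} : Finset ℕ) →
    ∃ k : ℤ, n + 3 ∈ trip ((flagPerm _ _ (stepGood C) ^ k) t).val := by
  intro m
  induction m with
  | zero =>
    intro t s hval hhit
    rw [show ((0 : ℕ) : ℤ) + 1 = 1 by norm_num, zpow_one] at hhit
    refine ⟨-1, ?_⟩
    rw [zpow_neg_one]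
    exact bwd_hit1 C t s hval hhit
  | succ m ih =>
    intro t s hval hhit
    by_cases hhit1 : trip ((flagPerm G faces C.hG)⁻¹ s).val = ({a, b, c} : Finset ℕ)
    · exact ⟨-1, by rw [zpow_neg_one]; exact bwd_hit1 C t s hval hhit1⟩
    · have hval' : ((flagPerm G faces C.hG)⁻¹ s).val =
          ((flagPerm _ _ (stepGood C))⁻¹ t).val := bwd_nohit C t s hval hhit1
      have hshift : ((flagPerm G faces C.hG)⁻¹ ^ ((m : ℤ) + 1))
          ((flagPerm G faces C.hG)⁻¹ s) =
          ((flagPerm G faces C.hG)⁻¹ ^ (((m + 1 : ℕ) : ℤ) + 1)) s := by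
        rw [show (((m + 1 : ℕ)) : ℤ) + 1 = ((m : ℤ) + 1) + 1 by push_cast; ring,
          zpow_add_one]
        rfl
      obtain ⟨k, hk⟩ := ih ((flagPerm _ _ (stepGood C))⁻¹ t)
        ((flagPerm G faces C.hG)⁻¹ s) hval' (by rw [hshift]; exact hhit)
      refine ⟨k + -1, ?_⟩
      have hconv : (flagPerm _ _ (stepGood C) ^ (k + -1)) t =
          (flagPerm _ _ (stepGood C) ^ k) ((flagPerm _ _ (stepGood C))⁻¹ t) := by
        rw [zpow_add, zpow_neg_one]
        rfl
      rw [hconv]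
      exact hk

lemma hitV (C : Ctx G faces n a b c)
    (hmeetF : ∀ s : Flag faces, ∃ k : ℤ,
      trip ((flagPerm G faces C.hG ^ k) s).val = ({a, b, c} : Finset ℕ)) :
    ∀ t : Flag (stepFaces faces n a b c), ∃ k : ℤ,
      n + 3 ∈ trip ((flagPerm _ _ (stepGood C) ^ k) t).val := by
  intro t
  by_cases hv : n + 3 ∈ trip t.val
  · refine ⟨0, ?_⟩
    rw [zpow_zero]
    exact hv
  · obtain ⟨⟨x, y, z⟩, hfS⟩ := t
    replace hv : n + 3 ∉ ({x, y, z} : Finset ℕ) := hv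
    obtain ⟨hold, hne⟩ := flag'_to_old C hfS hv
    obtain ⟨k₀, hk₀⟩ := hmeetF ⟨(x, y, z), hold⟩
    have hk0ne : k₀ ≠ 0 := by
      intro hc
      rw [hc, zpow_zero] at hk₀
      exact hne hk₀
    rcases lt_or_gt_of_ne hk0ne with hneg | hpos
    · apply bwd_hit C (-k₀ - 1).toNat ⟨(x, y, z), hfS⟩ ⟨(x, y, z), hold⟩ rfl
      have hm : (((-k₀ - 1).toNat : ℤ)) + 1 = -k₀ := by omega
      rw [hm, inv_zpow', neg_neg]
      exact hk₀
    · apply fwd_hit C (k₀ - 1).toNat ⟨(x, y, z), hfS⟩ ⟨(x, y, z), hold⟩ rfl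
      have hm : (((k₀ - 1).toNat : ℤ)) + 1 = k₀ := by omega
      rw [hm]
      exact hk₀

end Step3

section Step4

variable {G : SimpleGraph ℕ} {faces : Finset (Finset ℕ)} {n a b c : ℕ}

lemma vflag_reach (C : Ctx G faces n a b c) :
    ∀ s : Flag (stepFaces faces n a b c), n + 3 ∈ trip s.val →
    ∃ p q : ℕ, ∃ _ : p ∈ ({a, b, c} : Finset ℕ), ∃ _ : q ∈ ({a, b, c} : Finset ℕ),
    ∃ hpq : p ≠ q, ∃ hfl : IsFlag (stepFaces faces n a b c) (p, q, n + 3), ∃ m : ℤ,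
      (flagPerm _ _ (stepGood C) ^ m) ⟨(p, q, n + 3), hfl⟩ = s := by
  rintro ⟨⟨x, y, z⟩, hf⟩ hv
  replace hv : n + 3 ∈ ({x, y, z} : Finset ℕ) := hv
  have hcases : ∀ w ∈ ({x, y, z} : Finset ℕ), w = n + 3 ∨ w ∈ ({a, b, c} : Finset ℕ) :=
    fun w hw => mem_newface_cases C hf.mem hv hw
  simp only [Finset.mem_insert, Finset.mem_singleton] at hv
  rcases hv with hx | hy | hz
  · -- x = n + 3
    subst hx
    have hyF : y ∈ ({a, b, c} : Finset ℕ) := by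
      rcases hcases y (by simp) with h | h
      exacts [absurd h.symm hf.ne12, h]
    have hzF : z ∈ ({a, b, c} : Finset ℕ) := by
      rcases hcases z (by simp) with h | h
      exacts [absurd h.symm hf.ne13, h]
    obtain ⟨q, hqF, hqz, hqy⟩ := third_elt C hzF hyF (fun h => hf.ne23 h.symm)
    have bq := C.hbound _ C.hF q hqF
    have hfl : IsFlag (stepFaces faces n a b c) (z, q, n + 3) :=
      mk_flag (fun h => hqz h.symm) (fun h => hf.ne13 h.symm) (by omega)
        (newface_mem C hzF hqF (fun h => hqz h.symm))
    have h1 : ((flagPerm _ _ (stepGood C)) ⟨(z, q, n + 3), hfl⟩).val = (q, n + 3, y) := by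
      rw [perm_val_of (stepGood C) rfl,
        next_detour1 C hzF hqF hyF (fun h => hqz h.symm) (fun h => hf.ne23 h.symm) hqy]
    have h2 : ((flagPerm _ _ (stepGood C) ^ (2:ℤ)) ⟨(z, q, n + 3), hfl⟩).val =
        (n + 3, y, z) := by
      rw [show (2:ℤ) = 1 + 1 by norm_num, zpow_succ_apply, zpow_one,
        perm_val_of (stepGood C) h1,
        next_detour2 C hzF hqF hyF (fun h => hqz h.symm) (fun h => hf.ne23 h.symm) hqy]
    exact ⟨z, q, hzF, hqF, fun h => hqz h.symm, hfl, 2, Subtype.ext h2⟩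
  · -- y = n + 3
    subst hy
    have hxF : x ∈ ({a, b, c} : Finset ℕ) := by
      rcases hcases x (by simp) with h | h
      exacts [absurd h hf.ne12, h]
    have hzF : z ∈ ({a, b, c} : Finset ℕ) := by
      rcases hcases z (by simp) with h | h
      exacts [absurd h.symm hf.ne23, h]
    obtain ⟨p, hpF, hpx, hpz⟩ := third_elt C hxF hzF hf.ne13
    have bp := C.hbound _ C.hF p hpF
    have hfl : IsFlag (stepFaces faces n a b c) (p, x, n + 3) :=
      mk_flag hpx (by omega) hf.ne12 (newface_mem C hpF hxF hpx)
    have h1 : ((flagPerm _ _ (stepGood C)) ⟨(p, x, n + 3), hfl⟩).val = (x, n + 3, z) := by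
      rw [perm_val_of (stepGood C) rfl, next_detour1 C hpF hxF hzF hpx hpz hf.ne13]
    exact ⟨p, x, hpF, hxF, hpx, hfl, 1, Subtype.ext (by rw [zpow_one]; exact h1)⟩
  · -- z = n + 3
    subst hz
    have hxF : x ∈ ({a, b, c} : Finset ℕ) := by
      rcases hcases x (by simp) with h | h
      exacts [absurd h hf.ne13, h]
    have hyF : y ∈ ({a, b, c} : Finset ℕ) := by
      rcases hcases y (by simp) with h | h
      exacts [absurd h hf.ne23, h]
    exact ⟨x, y, hxF, hyF, hf.ne12, hf, 0, by rw [zpow_zero]; rfl⟩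

lemma detour_faces (C : Ctx G faces n a b c) {p q r : ℕ}
    (hp : p ∈ ({a, b, c} : Finset ℕ)) (hq : q ∈ ({a, b, c} : Finset ℕ))
    (hr : r ∈ ({a, b, c} : Finset ℕ)) (hpq : p ≠ q) (hpr : p ≠ r) (hqr : q ≠ r) :
    ∀ F'' ∈ ({{n + 3, a, b}, {n + 3, b, c}, {n + 3, a, c}} : Finset (Finset ℕ)),
      F'' = {p, q, n + 3} ∨ F'' = {q, n + 3, r} ∨ F'' = {n + 3, r, p} := by
  intro F'' hF''
  simp only [Finset.mem_insert, Finset.mem_singleton] at hp hq hr hF''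
  rcases hp with rfl | rfl | rfl <;> rcases hq with rfl | rfl | rfl <;>
    rcases hr with rfl | rfl | rfl <;>
    first
    | exact absurd rfl hpq
    | exact absurd rfl hpr
    | exact absurd rfl hqr
    | (rcases hF'' with rfl | rfl | rfl <;>
        first
        | (left; ext w; simp; done)
        | (left; ext w; simp; omega)
        | (right; left; ext w; simp; done)
        | (right; left; ext w; simp; omega)
        | (right; right; ext w; simp; done)
        | (right; right; ext w; simp; omega))

lemma step_cover (C : Ctx G faces n a b c)
    (hmeetF : ∀ s : Flag faces, ∃ k : ℤ,
      trip ((flagPerm G faces C.hG ^ k) s).val = ({a, b, c} : Finset ℕ)) :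
    ∃ T' : Fin 6 → Flag (stepFaces faces n a b c),
      (∀ t : Flag (stepFaces faces n a b c), ∃ j : Fin 6, ∃ k : ℤ,
        (flagPerm _ _ (stepGood C) ^ k) (T' j) = t) ∧
      (∀ t : Flag (stepFaces faces n a b c),
        ∀ F'' ∈ ({{n + 3, a, b}, {n + 3, b, c}, {n + 3, a, c}} : Finset (Finset ℕ)),
        ∃ k : ℤ, trip ((flagPerm _ _ (stepGood C) ^ k) t).val = F'') := by
  have mkfl : ∀ p q : ℕ, p ∈ ({a, b, c} : Finset ℕ) → q ∈ ({a, b, c} : Finset ℕ) →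
      p ≠ q → IsFlag (stepFaces faces n a b c) (p, q, n + 3) := by
    intro p q hp hq hpq
    have := C.hbound _ C.hF p hp
    have := C.hbound _ C.hF q hq
    exact mk_flag hpq (by omega) (by omega) (newface_mem C hp hq hpq)
  set T6 : Fin 6 → Flag (stepFaces faces n a b c) :=
    ![⟨(a, b, n + 3), mkfl a b (by simp) (by simp) C.hab⟩,
      ⟨(b, a, n + 3), mkfl b a (by simp) (by simp) (fun h => C.hab h.symm)⟩,
      ⟨(b, c, n + 3), mkfl b c (by simp) (by simp) C.hbc⟩,
      ⟨(c, b, n + 3), mkfl c b (by simp) (by simp) (fun h => C.hbc h.symm)⟩,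
      ⟨(a, c, n + 3), mkfl a c (by simp) (by simp) C.hac⟩,
      ⟨(c, a, n + 3), mkfl c a (by simp) (by simp) (fun h => C.hac h.symm)⟩] with hT6
  have hT6v : (T6 0).val = (a, b, n + 3) ∧ (T6 1).val = (b, a, n + 3) ∧
      (T6 2).val = (b, c, n + 3) ∧ (T6 3).val = (c, b, n + 3) ∧
      (T6 4).val = (a, c, n + 3) ∧ (T6 5).val = (c, a, n + 3) := by
    rw [hT6]
    exact ⟨rfl, rfl, rfl, rfl, rfl, rfl⟩
  refine ⟨T6, ?_, ?_⟩
  · intro t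
    obtain ⟨k₁, hk₁⟩ := hitV C hmeetF t
    obtain ⟨p, q, hp, hq, hpq, hfl, m, hm⟩ := vflag_reach C _ hk₁
    have hcan := orbit_cancel _ hm
    simp only [Finset.mem_insert, Finset.mem_singleton] at hp hq
    rcases hp with hp1 | hp1 | hp1 <;> rcases hq with hq1 | hq1 | hq1
    · exact absurd (hp1.trans hq1.symm) hpq
    · refine ⟨0, m - k₁, ?_⟩
      have heq : T6 0 = (⟨(p, q, n + 3), hfl⟩ : Flag (stepFaces faces n a b c)) :=
        Subtype.ext (by subst hp1; subst hq1; exact hT6v.1)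
      exact (congrArg (⇑(flagPerm _ _ (stepGood C) ^ (m - k₁))) heq).trans hcan
    · refine ⟨4, m - k₁, ?_⟩
      have heq : T6 4 = (⟨(p, q, n + 3), hfl⟩ : Flag (stepFaces faces n a b c)) :=
        Subtype.ext (by subst hp1; subst hq1; exact hT6v.2.2.2.2.1)
      exact (congrArg (⇑(flagPerm _ _ (stepGood C) ^ (m - k₁))) heq).trans hcan
    · refine ⟨1, m - k₁, ?_⟩
      have heq : T6 1 = (⟨(p, q, n + 3), hfl⟩ : Flag (stepFaces faces n a b c)) :=
        Subtype.ext (by subst hp1; subst hq1; exact hT6v.2.1)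
      exact (congrArg (⇑(flagPerm _ _ (stepGood C) ^ (m - k₁))) heq).trans hcan
    · exact absurd (hp1.trans hq1.symm) hpq
    · refine ⟨2, m - k₁, ?_⟩
      have heq : T6 2 = (⟨(p, q, n + 3), hfl⟩ : Flag (stepFaces faces n a b c)) :=
        Subtype.ext (by subst hp1; subst hq1; exact hT6v.2.2.1)
      exact (congrArg (⇑(flagPerm _ _ (stepGood C) ^ (m - k₁))) heq).trans hcan
    · refine ⟨5, m - k₁, ?_⟩
      have heq : T6 5 = (⟨(p, q, n + 3), hfl⟩ : Flag (stepFaces faces n a b c)) :=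
        Subtype.ext (by subst hp1; subst hq1; exact hT6v.2.2.2.2.2)
      exact (congrArg (⇑(flagPerm _ _ (stepGood C) ^ (m - k₁))) heq).trans hcan
    · refine ⟨3, m - k₁, ?_⟩
      have heq : T6 3 = (⟨(p, q, n + 3), hfl⟩ : Flag (stepFaces faces n a b c)) :=
        Subtype.ext (by subst hp1; subst hq1; exact hT6v.2.2.2.1)
      exact (congrArg (⇑(flagPerm _ _ (stepGood C) ^ (m - k₁))) heq).trans hcan
    · exact absurd (hp1.trans hq1.symm) hpq
  · intro t F'' hF''
    obtain ⟨k₁, hk₁⟩ := hitV C hmeetF t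
    obtain ⟨p, q, hp, hq, hpq, hfl, m, hm⟩ := vflag_reach C _ hk₁
    have hcan := orbit_cancel _ hm
    obtain ⟨r, hr, hrp, hrq⟩ := third_elt C hp hq hpq
    have h0 : ((flagPerm _ _ (stepGood C) ^ (0:ℤ)) ⟨(p, q, n + 3), hfl⟩).val =
        (p, q, n + 3) := by rw [zpow_zero]; rfl
    have h1 : ((flagPerm _ _ (stepGood C) ^ (1:ℤ)) ⟨(p, q, n + 3), hfl⟩).val =
        (q, n + 3, r) := by
      rw [zpow_one, perm_val_of (stepGood C) rfl,
        next_detour1 C hp hq hr hpq (fun h => hrp h.symm) (fun h => hrq h.symm)]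
    have h2 : ((flagPerm _ _ (stepGood C) ^ (2:ℤ)) ⟨(p, q, n + 3), hfl⟩).val =
        (n + 3, r, p) := by
      rw [show (2:ℤ) = 1 + 1 by norm_num, zpow_succ_apply,
        perm_val_of (stepGood C) h1,
        next_detour2 C hp hq hr hpq (fun h => hrp h.symm) (fun h => hrq h.symm)]
    rcases detour_faces C hp hq hr hpq (fun h => hrp h.symm) (fun h => hrq h.symm)
      F'' hF'' with hc | hc | hc
    · exact ⟨0 - (m - k₁), by
        rw [orbit_shift _ hcan 0, h0, trip_eq]; exact hc.symm⟩
    · exact ⟨1 - (m - k₁), by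
        rw [orbit_shift _ hcan 1, h1, trip_eq]; exact hc.symm⟩
    · exact ⟨2 - (m - k₁), by
        rw [orbit_shift _ hcan 2, h2, trip_eq]; exact hc.symm⟩

end Step4

theorem key : ∀ {n : ℕ} {G : SimpleGraph ℕ} {faces fresh : Finset (Finset ℕ)},
    IsTetChain n G faces fresh →
    fresh ⊆ faces ∧ (∀ F ∈ faces, ∀ x ∈ F, x < n + 3) ∧
    ∃ hG : Good G faces, ∃ T : Fin 6 → Flag faces,
      (∀ t : Flag faces, ∃ j : Fin 6, ∃ k : ℤ, (flagPerm G faces hG ^ k) (T j) = t) ∧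
      (∀ t : Flag faces, ∀ F' ∈ fresh, ∃ k : ℤ, trip ((flagPerm G faces hG ^ k) t).val = F') := by
  intro n G faces fresh h
  induction h with
  | base =>
    have hb : ∀ F ∈ tetraFaces, ∀ x ∈ F, x < 4 := by decide
    have hGood : Good tetraGraph tetraFaces := by
      refine ⟨by decide, by decide, by decide, ?_⟩
      intro F hF u hu w hw huw
      rw [tetraGraph, SimpleGraph.fromRel_adj]
      exact ⟨huw, Or.inl ⟨hb F hF u hu, hb F hF w hw⟩⟩
    have fp0 : IsFlag tetraFaces (0,1,2) := by decide
    have fp1 : IsFlag tetraFaces (0,1,3) := by decide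
    have fp2 : IsFlag tetraFaces (0,2,1) := by decide
    have fp3 : IsFlag tetraFaces (0,2,3) := by decide
    have fp4 : IsFlag tetraFaces (0,3,1) := by decide
    have fp5 : IsFlag tetraFaces (0,3,2) := by decide
    set E := flagPerm tetraGraph tetraFaces hGood with hE
    set T : Fin 6 → Flag tetraFaces := ![⟨(0,1,2), fp0⟩, ⟨(0,1,3), fp1⟩, ⟨(0,2,1), fp2⟩, ⟨(0,2,3), fp3⟩, ⟨(0,3,1), fp4⟩, ⟨(0,3,2), fp5⟩] with hT
    have hv00 : ((E ^ (0:ℤ)) (T 0)).val = (0,1,2) := by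
      rw [zpow_zero]; rfl
    have hv01 : ((E ^ (1:ℤ)) (T 0)).val = (1,2,3) := by
      rw [show (1:ℤ) = 0 + 1 by norm_num, zpow_succ_apply]
      exact perm_apply_eq hGood hv00 (by decide) (by decide) (by decide) (by decide)
    have hv02 : ((E ^ (2:ℤ)) (T 0)).val = (2,3,0) := by
      rw [show (2:ℤ) = 1 + 1 by norm_num, zpow_succ_apply]
      exact perm_apply_eq hGood hv01 (by decide) (by decide) (by decide) (by decide)
    have hv03 : ((E ^ (3:ℤ)) (T 0)).val = (3,0,1) := by
      rw [show (3:ℤ) = 2 + 1 by norm_num, zpow_succ_apply]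
      exact perm_apply_eq hGood hv02 (by decide) (by decide) (by decide) (by decide)
    have hv10 : ((E ^ (0:ℤ)) (T 1)).val = (0,1,3) := by
      rw [zpow_zero]; rfl
    have hv11 : ((E ^ (1:ℤ)) (T 1)).val = (1,3,2) := by
      rw [show (1:ℤ) = 0 + 1 by norm_num, zpow_succ_apply]
      exact perm_apply_eq hGood hv10 (by decide) (by decide) (by decide) (by decide)
    have hv12 : ((E ^ (2:ℤ)) (T 1)).val = (3,2,0) := by
      rw [show (2:ℤ) = 1 + 1 by norm_num, zpow_succ_apply]
      exact perm_apply_eq hGood hv11 (by decide) (by decide) (by decide) (by decide)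
    have hv13 : ((E ^ (3:ℤ)) (T 1)).val = (2,0,1) := by
      rw [show (3:ℤ) = 2 + 1 by norm_num, zpow_succ_apply]
      exact perm_apply_eq hGood hv12 (by decide) (by decide) (by decide) (by decide)
    have hv20 : ((E ^ (0:ℤ)) (T 2)).val = (0,2,1) := by
      rw [zpow_zero]; rfl
    have hv21 : ((E ^ (1:ℤ)) (T 2)).val = (2,1,3) := by
      rw [show (1:ℤ) = 0 + 1 by norm_num, zpow_succ_apply]
      exact perm_apply_eq hGood hv20 (by decide) (by decide) (by decide) (by decide)
    have hv22 : ((E ^ (2:ℤ)) (T 2)).val = (1,3,0) := by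
      rw [show (2:ℤ) = 1 + 1 by norm_num, zpow_succ_apply]
      exact perm_apply_eq hGood hv21 (by decide) (by decide) (by decide) (by decide)
    have hv23 : ((E ^ (3:ℤ)) (T 2)).val = (3,0,2) := by
      rw [show (3:ℤ) = 2 + 1 by norm_num, zpow_succ_apply]
      exact perm_apply_eq hGood hv22 (by decide) (by decide) (by decide) (by decide)
    have hv30 : ((E ^ (0:ℤ)) (T 3)).val = (0,2,3) := by
      rw [zpow_zero]; rfl
    have hv31 : ((E ^ (1:ℤ)) (T 3)).val = (2,3,1) := by
      rw [show (1:ℤ) = 0 + 1 by norm_num, zpow_succ_apply]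
      exact perm_apply_eq hGood hv30 (by decide) (by decide) (by decide) (by decide)
    have hv32 : ((E ^ (2:ℤ)) (T 3)).val = (3,1,0) := by
      rw [show (2:ℤ) = 1 + 1 by norm_num, zpow_succ_apply]
      exact perm_apply_eq hGood hv31 (by decide) (by decide) (by decide) (by decide)
    have hv33 : ((E ^ (3:ℤ)) (T 3)).val = (1,0,2) := by
      rw [show (3:ℤ) = 2 + 1 by norm_num, zpow_succ_apply]
      exact perm_apply_eq hGood hv32 (by decide) (by decide) (by decide) (by decide)
    have hv40 : ((E ^ (0:ℤ)) (T 4)).val = (0,3,1) := by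
      rw [zpow_zero]; rfl
    have hv41 : ((E ^ (1:ℤ)) (T 4)).val = (3,1,2) := by
      rw [show (1:ℤ) = 0 + 1 by norm_num, zpow_succ_apply]
      exact perm_apply_eq hGood hv40 (by decide) (by decide) (by decide) (by decide)
    have hv42 : ((E ^ (2:ℤ)) (T 4)).val = (1,2,0) := by
      rw [show (2:ℤ) = 1 + 1 by norm_num, zpow_succ_apply]
      exact perm_apply_eq hGood hv41 (by decide) (by decide) (by decide) (by decide)
    have hv43 : ((E ^ (3:ℤ)) (T 4)).val = (2,0,3) := by
      rw [show (3:ℤ) = 2 + 1 by norm_num, zpow_succ_apply]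
      exact perm_apply_eq hGood hv42 (by decide) (by decide) (by decide) (by decide)
    have hv50 : ((E ^ (0:ℤ)) (T 5)).val = (0,3,2) := by
      rw [zpow_zero]; rfl
    have hv51 : ((E ^ (1:ℤ)) (T 5)).val = (3,2,1) := by
      rw [show (1:ℤ) = 0 + 1 by norm_num, zpow_succ_apply]
      exact perm_apply_eq hGood hv50 (by decide) (by decide) (by decide) (by decide)
    have hv52 : ((E ^ (2:ℤ)) (T 5)).val = (2,1,0) := by
      rw [show (2:ℤ) = 1 + 1 by norm_num, zpow_succ_apply]
      exact perm_apply_eq hGood hv51 (by decide) (by decide) (by decide) (by decide)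
    have hv53 : ((E ^ (3:ℤ)) (T 5)).val = (1,0,3) := by
      rw [show (3:ℤ) = 2 + 1 by norm_num, zpow_succ_apply]
      exact perm_apply_eq hGood hv52 (by decide) (by decide) (by decide) (by decide)
    have hcov : ∀ t : Flag tetraFaces, ∃ j : Fin 6, ∃ k : ℤ, (E ^ k) (T j) = t := by
      rintro ⟨⟨x, y, z⟩, hf⟩
      have hx : x < 4 := hb _ hf.mem x (by simp [trip])
      have hy : y < 4 := hb _ hf.mem y (by simp [trip])
      have hz : z < 4 := hb _ hf.mem z (by simp [trip])
      have henum : ∀ x < 4, ∀ y < 4, ∀ z < 4, (x ≠ y ∧ x ≠ z ∧ y ≠ z ∧ trip (x,y,z) ∈ tetraFaces) →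
          (x,y,z) ∈ ([(0,1,2), (1,2,3), (2,3,0), (3,0,1), (0,1,3), (1,3,2), (3,2,0), (2,0,1), (0,2,1), (2,1,3), (1,3,0), (3,0,2), (0,2,3), (2,3,1), (3,1,0), (1,0,2), (0,3,1), (3,1,2), (1,2,0), (2,0,3), (0,3,2), (3,2,1), (2,1,0), (1,0,3)] : List (ℕ × ℕ × ℕ)) := by decide
      have hcase := henum x hx y hy z hz ⟨hf.ne12, hf.ne13, hf.ne23, hf.mem⟩
      simp only [List.mem_cons, List.not_mem_nil, or_false] at hcase
      rcases hcase with hc|hc|hc|hc|hc|hc|hc|hc|hc|hc|hc|hc|hc|hc|hc|hc|hc|hc|hc|hc|hc|hc|hc|hc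
      · exact ⟨0, 0, Subtype.ext (hv00.trans hc.symm)⟩
      · exact ⟨0, 1, Subtype.ext (hv01.trans hc.symm)⟩
      · exact ⟨0, 2, Subtype.ext (hv02.trans hc.symm)⟩
      · exact ⟨0, 3, Subtype.ext (hv03.trans hc.symm)⟩
      · exact ⟨1, 0, Subtype.ext (hv10.trans hc.symm)⟩
      · exact ⟨1, 1, Subtype.ext (hv11.trans hc.symm)⟩
      · exact ⟨1, 2, Subtype.ext (hv12.trans hc.symm)⟩
      · exact ⟨1, 3, Subtype.ext (hv13.trans hc.symm)⟩
      · exact ⟨2, 0, Subtype.ext (hv20.trans hc.symm)⟩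
      · exact ⟨2, 1, Subtype.ext (hv21.trans hc.symm)⟩
      · exact ⟨2, 2, Subtype.ext (hv22.trans hc.symm)⟩
      · exact ⟨2, 3, Subtype.ext (hv23.trans hc.symm)⟩
      · exact ⟨3, 0, Subtype.ext (hv30.trans hc.symm)⟩
      · exact ⟨3, 1, Subtype.ext (hv31.trans hc.symm)⟩
      · exact ⟨3, 2, Subtype.ext (hv32.trans hc.symm)⟩
      · exact ⟨3, 3, Subtype.ext (hv33.trans hc.symm)⟩
      · exact ⟨4, 0, Subtype.ext (hv40.trans hc.symm)⟩
      · exact ⟨4, 1, Subtype.ext (hv41.trans hc.symm)⟩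
      · exact ⟨4, 2, Subtype.ext (hv42.trans hc.symm)⟩
      · exact ⟨4, 3, Subtype.ext (hv43.trans hc.symm)⟩
      · exact ⟨5, 0, Subtype.ext (hv50.trans hc.symm)⟩
      · exact ⟨5, 1, Subtype.ext (hv51.trans hc.symm)⟩
      · exact ⟨5, 2, Subtype.ext (hv52.trans hc.symm)⟩
      · exact ⟨5, 3, Subtype.ext (hv53.trans hc.symm)⟩
    have hface0 : ∀ F' ∈ tetraFaces, ∃ k : ℤ, trip ((E ^ k) (T 0)).val = F' := by
      intro F' hF'
      rw [tetraFaces] at hF'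
      simp only [Finset.mem_insert, Finset.mem_singleton] at hF'
      rcases hF' with rfl|rfl|rfl|rfl
      · exact ⟨0, by rw [hv00]; decide⟩
      · exact ⟨3, by rw [hv03]; decide⟩
      · exact ⟨2, by rw [hv02]; decide⟩
      · exact ⟨1, by rw [hv01]; decide⟩
    have hface1 : ∀ F' ∈ tetraFaces, ∃ k : ℤ, trip ((E ^ k) (T 1)).val = F' := by
      intro F' hF'
      rw [tetraFaces] at hF'
      simp only [Finset.mem_insert, Finset.mem_singleton] at hF'
      rcases hF' with rfl|rfl|rfl|rfl
      · exact ⟨3, by rw [hv13]; decide⟩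
      · exact ⟨0, by rw [hv10]; decide⟩
      · exact ⟨2, by rw [hv12]; decide⟩
      · exact ⟨1, by rw [hv11]; decide⟩
    have hface2 : ∀ F' ∈ tetraFaces, ∃ k : ℤ, trip ((E ^ k) (T 2)).val = F' := by
      intro F' hF'
      rw [tetraFaces] at hF'
      simp only [Finset.mem_insert, Finset.mem_singleton] at hF'
      rcases hF' with rfl|rfl|rfl|rfl
      · exact ⟨0, by rw [hv20]; decide⟩
      · exact ⟨2, by rw [hv22]; decide⟩
      · exact ⟨3, by rw [hv23]; decide⟩
      · exact ⟨1, by rw [hv21]; decide⟩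
    have hface3 : ∀ F' ∈ tetraFaces, ∃ k : ℤ, trip ((E ^ k) (T 3)).val = F' := by
      intro F' hF'
      rw [tetraFaces] at hF'
      simp only [Finset.mem_insert, Finset.mem_singleton] at hF'
      rcases hF' with rfl|rfl|rfl|rfl
      · exact ⟨3, by rw [hv33]; decide⟩
      · exact ⟨2, by rw [hv32]; decide⟩
      · exact ⟨0, by rw [hv30]; decide⟩
      · exact ⟨1, by rw [hv31]; decide⟩
    have hface4 : ∀ F' ∈ tetraFaces, ∃ k : ℤ, trip ((E ^ k) (T 4)).val = F' := by
      intro F' hF'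
      rw [tetraFaces] at hF'
      simp only [Finset.mem_insert, Finset.mem_singleton] at hF'
      rcases hF' with rfl|rfl|rfl|rfl
      · exact ⟨2, by rw [hv42]; decide⟩
      · exact ⟨0, by rw [hv40]; decide⟩
      · exact ⟨3, by rw [hv43]; decide⟩
      · exact ⟨1, by rw [hv41]; decide⟩
    have hface5 : ∀ F' ∈ tetraFaces, ∃ k : ℤ, trip ((E ^ k) (T 5)).val = F' := by
      intro F' hF'
      rw [tetraFaces] at hF'
      simp only [Finset.mem_insert, Finset.mem_singleton] at hF'
      rcases hF' with rfl|rfl|rfl|rfl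
      · exact ⟨2, by rw [hv52]; decide⟩
      · exact ⟨3, by rw [hv53]; decide⟩
      · exact ⟨0, by rw [hv50]; decide⟩
      · exact ⟨1, by rw [hv51]; decide⟩
    refine ⟨Finset.Subset.refl _, by simpa using hb, hGood, T, hcov, ?_⟩
    intro t F' hF'
    obtain ⟨j, k, hk⟩ := hcov t
    have hface : ∀ F' ∈ tetraFaces, ∃ k : ℤ, trip ((E ^ k) (T j)).val = F' := by
      fin_cases j
      exacts [hface0, hface1, hface2, hface3, hface4, hface5]
    obtain ⟨k₀, hk₀⟩ := hface F' hF'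
    exact ⟨k₀ - k, by rw [orbit_shift E hk k₀]; exact hk₀⟩
  | @step n G faces fresh F a b c hprev hFfresh hFeq hab hac hbc ih =>
    obtain ⟨hfsub, hbound, hG, T, hcov, hmeet⟩ := ih
    subst hFeq
    have C : Ctx G faces n a b c := ⟨hG, hbound, hfsub hFfresh, hab, hac, hbc⟩
    have hmeetF : ∀ s : Flag faces, ∃ k : ℤ,
        trip ((flagPerm G faces C.hG ^ k) s).val = ({a, b, c} : Finset ℕ) :=
      fun s => hmeet s _ hFfresh
    obtain ⟨T', hcov', hmeet'⟩ := step_cover C hmeetF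
    refine ⟨Finset.subset_union_right, ?_, stepGood C, T', hcov', hmeet'⟩
    intro X hX x hx
    rcases mem_stepFaces.mp hX with ⟨hXf, _⟩ | h
    · have := hbound X hXf x hx
      omega
    · have hva := C.va
      have hvb := C.vb
      have hvc := C.vc
      rcases h with rfl | rfl | rfl <;> simp at hx <;> rcases hx with rfl | rfl | rfl <;>
        omega

end TCP

theorem tet_chain_at_most_six_zigzags {n : ℕ} {G : SimpleGraph ℕ}
    {faces fresh : Finset (Finset ℕ)} (h : IsTetChain n G faces fresh) :
    ∃ w : Fin 6 → (ℤ → ℕ), ∀ z : ℤ → ℕ, IsZigzag G faces z →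
      ∃ j : Fin 6, ∃ k : ℤ, z = fun i => w j (i + k) := by
  obtain ⟨-, -, hG, T, hcov, -⟩ := TCP.key h
  exact ⟨fun j => TCP.flagSeq hG (T j), fun z hz => TCP.cover_to_main hG T hcov z hz⟩
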